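/- Let P ∈ ℝ^{n×n} be a doubly stochastic matrix with second largest singular value σ₂(P), let x ∈ ℝ^n be a probability vector (all entries nonnegative and summing to 1), and let t be a nonnegative integer. Then ‖Pᵗx − (1/n)𝟏‖₁ ≤ σ₂(P)ᵗ·√n, where ‖·‖₁ is the ℓ¹ norm and 𝟏 ∈ ℝ^n is the all-ones vector. -/

import Mathlib

/-- The singular values of a square real matrix `M`, namely the square roots of the
eigenvalues of the Hermitian matrix `M * Mᴴ` (with multiplicity, in arbitrary order). -/
noncomputable def singVals {n : ℕ} (M : Matrix (Fin n) (Fin n) ℝ) : Fin n → ℝ :=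
  fun i => Real.sqrt ((Matrix.isHermitian_mul_conjTranspose_self M).eigenvalues i)

/-- The second largest singular value (with multiplicity) of a square real matrix:
the supremum, over all pairs of distinct indices, of the smaller of the two
corresponding singular values. -/
noncomputable def sigma2 {n : ℕ} (M : Matrix (Fin n) (Fin n) ℝ) : ℝ :=
  sSup {s : ℝ | ∃ i j : Fin n, i ≠ j ∧ s = min (singVals M i) (singVals M j)}

open Matrix Finset

lemma inner_euclid {n : ℕ} (x y : EuclideanSpace ℝ (Fin n)) :
    (inner ℝ x y : ℝ) = ∑ i, x i * y i := by
  simp [EuclideanSpace.inner_eq_star_dotProduct, dotProduct, mul_comm]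

lemma contract {n : ℕ} (M : Matrix (Fin n) (Fin n) ℝ)
    (h0 : ∀ i j, 0 ≤ M i j) (hr : ∀ i, ∑ j, M i j = 1) (hc : ∀ j, ∑ i, M i j = 1)
    (z : Fin n → ℝ) : ∑ i, (M *ᵥ z) i ^ 2 ≤ ∑ i, z i ^ 2 := by
  have step : ∀ i, (M *ᵥ z) i ^ 2 ≤ ∑ j, M i j * z j ^ 2 := by
    intro i
    have := Finset.sum_sq_le_sum_mul_sum_of_sq_eq_mul Finset.univ
      (f := fun j => M i j) (g := fun j => M i j * z j ^ 2) (r := fun j => M i j * z j)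
      (fun j _ => h0 i j) (fun j _ => mul_nonneg (h0 i j) (sq_nonneg _))
      (fun j _ => by ring)
    calc (M *ᵥ z) i ^ 2 = (∑ j, M i j * z j) ^ 2 := by rfl
      _ ≤ (∑ j, M i j) * ∑ j, M i j * z j ^ 2 := this
      _ = ∑ j, M i j * z j ^ 2 := by rw [hr i, one_mul]
  calc ∑ i, (M *ᵥ z) i ^ 2 ≤ ∑ i, ∑ j, M i j * z j ^ 2 := Finset.sum_le_sum fun i _ => step i
    _ = ∑ j, (∑ i, M i j) * z j ^ 2 := by rw [Finset.sum_comm]; simp [Finset.sum_mul]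
    _ = ∑ j, z j ^ 2 := by simp [hc]

lemma sigma2_set_bddAbove {n : ℕ} (P : Matrix (Fin n) (Fin n) ℝ) :
    BddAbove {s : ℝ | ∃ i j : Fin n, i ≠ j ∧ s = min (singVals P i) (singVals P j)} := by
  apply Set.Finite.bddAbove
  apply Set.Finite.subset (Set.finite_range fun p : Fin n × Fin n =>
    min (singVals P p.1) (singVals P p.2))
  rintro s ⟨i, j, -, rfl⟩
  exact ⟨(i, j), rfl⟩

lemma min_le_sigma2 {n : ℕ} (P : Matrix (Fin n) (Fin n) ℝ) {i j : Fin n} (h : i ≠ j) :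
    min (singVals P i) (singVals P j) ≤ sigma2 P :=
  le_csSup (sigma2_set_bddAbove P) ⟨i, j, h, rfl⟩

lemma sigma2_nonneg {n : ℕ} (P : Matrix (Fin n) (Fin n) ℝ) : 0 ≤ sigma2 P := by
  by_cases hS : {s : ℝ | ∃ i j : Fin n, i ≠ j ∧ s = min (singVals P i) (singVals P j)} = ∅
  · rw [sigma2, hS, Real.sSup_empty]
  · obtain ⟨s, i, j, hij, rfl⟩ := Set.nonempty_iff_ne_empty.2 hS
    refine le_trans ?_ (min_le_sigma2 P hij)
    exact le_min (Real.sqrt_nonneg _) (Real.sqrt_nonneg _)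

lemma quadform_bound {n : ℕ} (hn : 0 < n) (P : Matrix (Fin n) (Fin n) ℝ)
    (hnonneg : ∀ i j, 0 ≤ P i j) (hrow : ∀ i, ∑ j, P i j = 1) (hcol : ∀ j, ∑ i, P i j = 1)
    (z : Fin n → ℝ) (hz : ∑ i, z i = 0) :
    z ⬝ᵥ ((P * Pᴴ) *ᵥ z) ≤ sigma2 P ^ 2 * ∑ i, z i ^ 2 := by
  have hA : (P * Pᴴ).IsHermitian := Matrix.isHermitian_mul_conjTranspose_self P
  set b := hA.eigenvectorBasis with hb
  set lam := hA.eigenvalues with hlam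
  have hPH : Pᴴ = Pᵀ := Matrix.conjTranspose_eq_transpose_of_trivial P
  have hAT : (P * Pᴴ)ᵀ = P * Pᴴ := by
    rw [← Matrix.conjTranspose_eq_transpose_of_trivial]; exact hA
  -- quadratic form as a sum of squares
  have quad : ∀ w : Fin n → ℝ, w ⬝ᵥ ((P * Pᴴ) *ᵥ w) = ∑ j, (Pᵀ *ᵥ w) j ^ 2 := by
    intro w
    rw [hPH, ← Matrix.mulVec_mulVec, Matrix.dotProduct_mulVec, ← Matrix.mulVec_transpose]
    simp [dotProduct, sq]
  have quad_le : ∀ w : Fin n → ℝ, w ⬝ᵥ ((P * Pᴴ) *ᵥ w) ≤ ∑ i, w i ^ 2 := by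
    intro w
    rw [quad w]
    exact contract Pᵀ (fun i j => hnonneg j i)
      (fun i => by simpa [Matrix.transpose_apply] using hcol i)
      (fun j => by simpa [Matrix.transpose_apply] using hrow j) w
  -- dot products with eigenvectors
  have hinner_mul : ∀ (i : Fin n) (w : Fin n → ℝ),
      ⇑(b i) ⬝ᵥ ((P * Pᴴ) *ᵥ w) = lam i * (⇑(b i) ⬝ᵥ w) := by
    intro i w
    rw [Matrix.dotProduct_mulVec, ← Matrix.mulVec_transpose, hAT,
      hA.mulVec_eigenvectorBasis i, smul_dotProduct]
    rfl
  -- Parseval-type identity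
  have hpar : ∀ u w : EuclideanSpace ℝ (Fin n),
      ∑ i, (inner ℝ (b i) u : ℝ) * inner ℝ (b i) w = inner ℝ u w := by
    intro u w
    rw [← b.sum_inner_mul_inner u w]
    exact Finset.sum_congr rfl fun i _ => by rw [real_inner_comm u (b i)]
  set c : Fin n → ℝ := fun i => ⇑(b i) ⬝ᵥ z with hc
  set u1 : Fin n → ℝ := fun _ => 1 with hu1
  set d : Fin n → ℝ := fun i => ⇑(b i) ⬝ᵥ u1 with hd
  have hinner_dot : ∀ (i : Fin n) (w : Fin n → ℝ),
      (inner ℝ (b i) ((WithLp.equiv 2 (Fin n → ℝ)).symm w) : ℝ) = ⇑(b i) ⬝ᵥ w := by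
    intro i w
    rw [inner_euclid]
    rfl
  have key1 : ∑ i, c i ^ 2 = ∑ k, z k ^ 2 := by
    have := hpar ((WithLp.equiv 2 (Fin n → ℝ)).symm z) ((WithLp.equiv 2 (Fin n → ℝ)).symm z)
    rw [inner_euclid] at this
    simp only [hinner_dot] at this
    simpa [sq] using this
  have key2 : ∑ i, d i * c i = 0 := by
    have := hpar ((WithLp.equiv 2 (Fin n → ℝ)).symm u1) ((WithLp.equiv 2 (Fin n → ℝ)).symm z)
    rw [inner_euclid] at this
    simp only [hinner_dot] at this
    simpa [hu1, hz] using this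
  have key3 : ∑ i, d i ^ 2 = (n : ℝ) := by
    have := hpar ((WithLp.equiv 2 (Fin n → ℝ)).symm u1) ((WithLp.equiv 2 (Fin n → ℝ)).symm u1)
    rw [inner_euclid] at this
    simp only [hinner_dot] at this
    simpa [hu1, sq] using this
  -- expansion of the quadratic form
  have hQ : z ⬝ᵥ ((P * Pᴴ) *ᵥ z) = ∑ i, lam i * c i ^ 2 := by
    have h := hpar ((WithLp.equiv 2 (Fin n → ℝ)).symm z)
      ((WithLp.equiv 2 (Fin n → ℝ)).symm ((P * Pᴴ) *ᵥ z))
    rw [inner_euclid] at h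
    simp only [hinner_dot] at h
    simp only [WithLp.equiv_symm_apply, PiLp.toLp_apply] at h
    calc z ⬝ᵥ ((P * Pᴴ) *ᵥ z) = ∑ x, z x * ((P * Pᴴ) *ᵥ z) x := rfl
      _ = ∑ x, ((WithLp.equiv 2 (Fin n → ℝ)) (b x) ⬝ᵥ z) *
            ((WithLp.equiv 2 (Fin n → ℝ)) (b x) ⬝ᵥ ((P * Pᴴ) *ᵥ z)) := h.symm
      _ = ∑ i, lam i * c i ^ 2 := Finset.sum_congr rfl fun i _ => by
            rw [WithLp.equiv_apply, hinner_mul i z]; ring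
  -- eigenvalues are in [0,1]
  have hl0 : ∀ i, 0 ≤ lam i := fun i =>
    (Matrix.posSemidef_self_mul_conjTranspose P).eigenvalues_nonneg i
  have hbb : ∀ i : Fin n, ⇑(b i) ⬝ᵥ ⇑(b i) = 1 := by
    intro i
    have h1 : (inner ℝ (b i) (b i) : ℝ) = 1 := by
      rw [real_inner_self_eq_norm_sq, b.orthonormal.1 i]; norm_num
    rw [inner_euclid] at h1
    simpa [dotProduct] using h1
  have hl1 : ∀ i, lam i ≤ 1 := by
    intro i
    have h2 := quad_le (⇑(b i))
    rw [hinner_mul i (⇑(b i)), hbb i, mul_one] at h2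
    have h3 : ∑ k, (⇑(b i) : Fin n → ℝ) k ^ 2 = 1 := by
      simpa [dotProduct, sq] using hbb i
    rwa [h3] at h2
  -- A fixes the all-ones vector
  have hAu : (P * Pᴴ) *ᵥ u1 = u1 := by
    have h1 : Pᴴ *ᵥ u1 = u1 := by
      funext k
      rw [hPH]
      simp only [Matrix.mulVec, dotProduct, Matrix.transpose_apply, hu1, mul_one]
      exact hcol k
    rw [← Matrix.mulVec_mulVec, h1]
    funext k
    simp only [Matrix.mulVec, dotProduct, hu1, mul_one]
    exact hrow k
  have heig : ∀ i, lam i * d i = d i := by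
    intro i
    rw [hd]
    conv_rhs => rw [← hAu]
    exact (hinner_mul i u1).symm
  have hsv : ∀ i, singVals P i = Real.sqrt (lam i) := fun i => rfl
  have hσ0 : 0 ≤ sigma2 P := sigma2_nonneg P
  by_cases hcase : ∃ i j : Fin n, i ≠ j ∧ lam i = 1 ∧ lam j = 1
  · obtain ⟨i, j, hij, hi, hj⟩ := hcase
    have h1σ : (1 : ℝ) ≤ sigma2 P := by
      have := min_le_sigma2 P hij
      rwa [hsv, hsv, hi, hj, Real.sqrt_one, min_self] at this
    have hsum0 : 0 ≤ ∑ k, z k ^ 2 := Finset.sum_nonneg fun k _ => sq_nonneg _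
    calc z ⬝ᵥ ((P * Pᴴ) *ᵥ z) = ∑ i, lam i * c i ^ 2 := hQ
      _ ≤ ∑ i, c i ^ 2 := Finset.sum_le_sum fun i _ => by
          nlinarith [hl1 i, sq_nonneg (c i)]
      _ = ∑ k, z k ^ 2 := key1
      _ = 1 * ∑ k, z k ^ 2 := (one_mul _).symm
      _ ≤ sigma2 P ^ 2 * ∑ i, z i ^ 2 := by
          apply mul_le_mul_of_nonneg_right _ hsum0
          nlinarith
  · push_neg at hcase
    obtain ⟨i₀, hd0⟩ : ∃ i₀, d i₀ ≠ 0 := by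
      by_contra hall
      push_neg at hall
      have : ∑ i, d i ^ 2 = 0 := Finset.sum_eq_zero fun i _ => by rw [hall i]; ring
      rw [key3] at this
      exact absurd this (by positivity)
    have hli0 : lam i₀ = 1 := by
      have := heig i₀
      have h := mul_right_cancel₀ hd0 (by linarith [this] : lam i₀ * d i₀ = 1 * d i₀)
      exact h
    have hdzero : ∀ i, i ≠ i₀ → d i = 0 := by
      intro i hi
      by_contra hdi
      have hli : lam i = 1 := by
        have := heig i
        exact mul_right_cancel₀ hdi (by linarith [this] : lam i * d i = 1 * d i)
      exact hcase i₀ i (Ne.symm hi) hli0 hli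
    have hc0 : c i₀ = 0 := by
      have : ∑ i, d i * c i = d i₀ * c i₀ := by
        rw [← Finset.sum_subset (Finset.subset_univ {i₀})]
        · simp
        · intro i _ hi
          rw [hdzero i (by simpa using hi)]; ring
      rw [key2] at this
      exact (mul_eq_zero.1 this.symm).resolve_left hd0
    have hle : ∀ i, i ≠ i₀ → lam i ≤ sigma2 P ^ 2 := by
      intro i hi
      have hmin := min_le_sigma2 P hi
      rw [hsv, hsv, hli0, Real.sqrt_one] at hmin
      have hminl : min (Real.sqrt (lam i)) 1 = Real.sqrt (lam i) :=
        min_eq_left (by rw [show (1:ℝ) = Real.sqrt 1 by simp]; exact Real.sqrt_le_sqrt (hl1 i))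
      rw [hminl] at hmin
      calc lam i = Real.sqrt (lam i) ^ 2 := (Real.sq_sqrt (hl0 i)).symm
        _ ≤ sigma2 P ^ 2 := by
            apply pow_le_pow_left₀ (Real.sqrt_nonneg _) hmin
    calc z ⬝ᵥ ((P * Pᴴ) *ᵥ z) = ∑ i, lam i * c i ^ 2 := hQ
      _ ≤ ∑ i, sigma2 P ^ 2 * c i ^ 2 := by
          apply Finset.sum_le_sum
          intro i _
          by_cases h : i = i₀
          · subst h; rw [hc0]; simp
          · exact mul_le_mul_of_nonneg_right (hle i h) (sq_nonneg _)
      _ = sigma2 P ^ 2 * ∑ i, c i ^ 2 := by rw [Finset.mul_sum]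
      _ = sigma2 P ^ 2 * ∑ i, z i ^ 2 := by rw [key1]

lemma quad_eq {n : ℕ} (P : Matrix (Fin n) (Fin n) ℝ) (w : Fin n → ℝ) :
    w ⬝ᵥ ((P * Pᴴ) *ᵥ w) = ∑ j, (Pᵀ *ᵥ w) j ^ 2 := by
  rw [Matrix.conjTranspose_eq_transpose_of_trivial, ← Matrix.mulVec_mulVec,
    Matrix.dotProduct_mulVec, ← Matrix.mulVec_transpose]
  simp [dotProduct, sq]

lemma sum_mulVec {n : ℕ} (P : Matrix (Fin n) (Fin n) ℝ) (hcol : ∀ j, ∑ i, P i j = 1)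
    (z : Fin n → ℝ) : ∑ i, (P *ᵥ z) i = ∑ j, z j := by
  calc ∑ i, (P *ᵥ z) i = ∑ i, ∑ j, P i j * z j := rfl
    _ = ∑ j, (∑ i, P i j) * z j := by rw [Finset.sum_comm]; simp [Finset.sum_mul]
    _ = ∑ j, z j := by simp [hcol]

lemma step_bound {n : ℕ} (hn : 0 < n) (P : Matrix (Fin n) (Fin n) ℝ)
    (hnonneg : ∀ i j, 0 ≤ P i j) (hrow : ∀ i, ∑ j, P i j = 1) (hcol : ∀ j, ∑ i, P i j = 1)
    (z : Fin n → ℝ) (hz : ∑ i, z i = 0) :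
    ∑ i, (P *ᵥ z) i ^ 2 ≤ sigma2 P ^ 2 * ∑ i, z i ^ 2 := by
  set w := P *ᵥ z with hw
  have hws : ∑ i, w i = 0 := by rw [hw, sum_mulVec P hcol z, hz]
  have hz2 : (0:ℝ) ≤ ∑ i, z i ^ 2 := Finset.sum_nonneg fun i _ => sq_nonneg _
  have hw2 : (0:ℝ) ≤ ∑ i, w i ^ 2 := Finset.sum_nonneg fun i _ => sq_nonneg _
  have e1 : ∑ i, w i ^ 2 = (Pᵀ *ᵥ w) ⬝ᵥ z := by
    calc ∑ i, w i ^ 2 = w ⬝ᵥ (P *ᵥ z) := by simp [dotProduct, sq, hw]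
      _ = (Pᵀ *ᵥ w) ⬝ᵥ z := by rw [Matrix.dotProduct_mulVec, ← Matrix.mulVec_transpose]
  have e2 : ((Pᵀ *ᵥ w) ⬝ᵥ z) ^ 2 ≤ (∑ j, (Pᵀ *ᵥ w) j ^ 2) * ∑ i, z i ^ 2 :=
    Finset.sum_mul_sq_le_sq_mul_sq Finset.univ _ _
  have e3 : ∑ j, (Pᵀ *ᵥ w) j ^ 2 ≤ sigma2 P ^ 2 * ∑ i, w i ^ 2 := by
    rw [← quad_eq P w]
    exact quadform_bound hn P hnonneg hrow hcol w hws
  have e4 : (∑ i, w i ^ 2) ^ 2 ≤ sigma2 P ^ 2 * (∑ i, w i ^ 2) * ∑ i, z i ^ 2 := by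
    calc (∑ i, w i ^ 2) ^ 2 = ((Pᵀ *ᵥ w) ⬝ᵥ z) ^ 2 := by rw [e1]
      _ ≤ (∑ j, (Pᵀ *ᵥ w) j ^ 2) * ∑ i, z i ^ 2 := e2
      _ ≤ sigma2 P ^ 2 * (∑ i, w i ^ 2) * ∑ i, z i ^ 2 :=
          mul_le_mul_of_nonneg_right e3 hz2
  rcases eq_or_lt_of_le hw2 with h | h
  · rw [← h]; positivity
  · nlinarith [e4, h]

lemma col_sum_pow {n : ℕ} (P : Matrix (Fin n) (Fin n) ℝ) (hcol : ∀ j, ∑ i, P i j = 1)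
    (t : ℕ) : ∀ j, ∑ i, (P ^ t) i j = 1 := by
  induction t with
  | zero => intro j; rw [pow_zero]; simp [Matrix.one_apply]
  | succ s ihs =>
    intro j
    rw [pow_succ]
    calc ∑ i, (P ^ s * P) i j = ∑ i, ∑ k, (P ^ s) i k * P k j := by
          simp [Matrix.mul_apply]
      _ = ∑ k, (∑ i, (P ^ s) i k) * P k j := by rw [Finset.sum_comm]; simp [Finset.sum_mul]
      _ = ∑ k, P k j := by simp [ihs]
      _ = 1 := hcol j

lemma iter_bound {n : ℕ} (hn : 0 < n) (P : Matrix (Fin n) (Fin n) ℝ)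
    (hnonneg : ∀ i j, 0 ≤ P i j) (hrow : ∀ i, ∑ j, P i j = 1) (hcol : ∀ j, ∑ i, P i j = 1)
    (z : Fin n → ℝ) (hz : ∑ i, z i = 0) (t : ℕ) :
    ∑ i, ((P ^ t) *ᵥ z) i ^ 2 ≤ (sigma2 P ^ 2) ^ t * ∑ i, z i ^ 2 := by
  induction t with
  | zero => simp [Matrix.one_mulVec]
  | succ t ih =>
    have hps : ∑ i, ((P ^ t) *ᵥ z) i = 0 := by
      rw [sum_mulVec (P ^ t) (col_sum_pow P hcol t) z, hz]
    have hstep := step_bound hn P hnonneg hrow hcol ((P ^ t) *ᵥ z) hps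
    have hmv : (P ^ (t + 1)) *ᵥ z = P *ᵥ ((P ^ t) *ᵥ z) := by
      rw [Matrix.mulVec_mulVec, ← pow_succ']
    rw [hmv]
    calc ∑ i, (P *ᵥ ((P ^ t) *ᵥ z)) i ^ 2 ≤ sigma2 P ^ 2 * ∑ i, ((P ^ t) *ᵥ z) i ^ 2 := hstep
      _ ≤ sigma2 P ^ 2 * ((sigma2 P ^ 2) ^ t * ∑ i, z i ^ 2) :=
          mul_le_mul_of_nonneg_left ih (sq_nonneg _)
      _ = (sigma2 P ^ 2) ^ (t + 1) * ∑ i, z i ^ 2 := by ring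

/-- for a doubly stochastic `P`, a probability vector `x` and `t ≥ 0`,
`‖Pᵗ x - (1/n) 𝟏‖₁ ≤ σ₂(P)ᵗ √n`. -/
theorem stmt_4 {n : ℕ} (P : Matrix (Fin n) (Fin n) ℝ)
    (hnonneg : ∀ i j, 0 ≤ P i j)
    (hrow : ∀ i, ∑ j, P i j = 1)
    (hcol : ∀ j, ∑ i, P i j = 1)
    (x : Fin n → ℝ) (hx : ∀ i, 0 ≤ x i) (hx1 : ∑ i, x i = 1) (t : ℕ) :
    ∑ i, |(P ^ t).mulVec x i - 1 / n| ≤ sigma2 P ^ t * Real.sqrt n := by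
  have hn : 0 < n := by
    by_contra h
    push_neg at h
    interval_cases n
    simp at hx1
  have hnR : (0:ℝ) < n := by exact_mod_cast hn
  set y : Fin n → ℝ := fun i => x i - 1 / n with hy
  have hysum : ∑ i, y i = 0 := by
    simp only [hy, Finset.sum_sub_distrib, hx1, Finset.sum_const, Finset.card_univ,
      Fintype.card_fin, nsmul_eq_mul]
    field_simp
    norm_num
  -- P^t fixes the all ones vector
  have hP1 : ∀ s : ℕ, (P ^ s) *ᵥ (fun _ => (1:ℝ)) = fun _ => 1 := by
    intro s
    induction s with
    | zero => simp [Matrix.one_mulVec]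
    | succ s ih =>
      rw [pow_succ', ← Matrix.mulVec_mulVec, ih]
      funext k
      simp only [Matrix.mulVec, dotProduct, mul_one]
      exact hrow k
  set w : Fin n → ℝ := (P ^ t) *ᵥ y with hw
  have heq : ∀ i, (P ^ t).mulVec x i - 1 / n = w i := by
    intro i
    have hyv : y = x - (1/(n:ℝ)) • (fun _ => (1:ℝ)) := by
      funext k
      simp [hy]
    have : (P ^ t) *ᵥ y = (P ^ t) *ᵥ x - (1/(n:ℝ)) • ((P ^ t) *ᵥ (fun _ => (1:ℝ))) := by
      rw [hyv, Matrix.mulVec_sub, Matrix.mulVec_smul]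
    rw [hw, this, hP1 t]
    simp
  simp only [heq]
  -- bound on ∑ y²
  have hxsq : ∑ i, x i ^ 2 ≤ 1 := by
    have := Finset.sum_sq_le_sq_sum_of_nonneg (s := Finset.univ) (f := x) fun i _ => hx i
    rwa [hx1, one_pow] at this
  have hysq : ∑ i, y i ^ 2 ≤ 1 := by
    have hterm : ∀ i, y i ^ 2 = x i ^ 2 - (2 * (1/(n:ℝ))) * x i + (1/n)^2 := by
      intro i; simp only [hy]; ring
    have hexp : ∑ i, y i ^ 2 =
        (∑ i, x i ^ 2) - 2 * (1/(n:ℝ)) + (n:ℝ) * (1/n)^2 := by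
      rw [Finset.sum_congr rfl fun i _ => hterm i, Finset.sum_add_distrib,
        Finset.sum_sub_distrib, ← Finset.mul_sum, hx1, Finset.sum_const,
        Finset.card_univ, Fintype.card_fin, nsmul_eq_mul, mul_one]
    have hfld : (n:ℝ) * (1/n)^2 = 1/n := by field_simp
    have h1n : (0:ℝ) < 1/n := by positivity
    rw [hexp, hfld]
    linarith
  have hwsq : ∑ i, w i ^ 2 ≤ (sigma2 P ^ 2) ^ t := by
    have := iter_bound hn P hnonneg hrow hcol y hysum t
    have h2 : (sigma2 P ^ 2) ^ t * ∑ i, y i ^ 2 ≤ (sigma2 P ^ 2) ^ t * 1 :=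
      mul_le_mul_of_nonneg_left hysq (by positivity)
    rw [mul_one] at h2
    exact le_trans this h2
  -- Cauchy–Schwarz : (∑ |w i|)² ≤ n * ∑ w²
  have hcs : (∑ i, |w i|) ^ 2 ≤ (n:ℝ) * ∑ i, w i ^ 2 := by
    have := Finset.sum_mul_sq_le_sq_mul_sq Finset.univ (fun _ : Fin n => (1:ℝ))
      (fun i => |w i|)
    simpa [Finset.sum_const, Finset.card_univ, Fintype.card_fin, sq_abs] using this
  have hS0 : 0 ≤ ∑ i, |w i| := Finset.sum_nonneg fun i _ => abs_nonneg _
  have hσt : 0 ≤ sigma2 P ^ t := pow_nonneg (sigma2_nonneg P) t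
  have hfinal : (∑ i, |w i|) ^ 2 ≤ (sigma2 P ^ t) ^ 2 * (n:ℝ) := by
    have h3 : (n:ℝ) * ∑ i, w i ^ 2 ≤ (n:ℝ) * (sigma2 P ^ 2) ^ t :=
      mul_le_mul_of_nonneg_left hwsq (le_of_lt hnR)
    have h4 : (sigma2 P ^ 2) ^ t = (sigma2 P ^ t) ^ 2 := by
      rw [← pow_mul, ← pow_mul, mul_comm]
    nlinarith [hcs, h3]
  calc ∑ i, |w i| = Real.sqrt ((∑ i, |w i|) ^ 2) := (Real.sqrt_sq hS0).symm
    _ ≤ Real.sqrt ((sigma2 P ^ t) ^ 2 * (n:ℝ)) := Real.sqrt_le_sqrt hfinal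
    _ = sigma2 P ^ t * Real.sqrt n := by
        rw [Real.sqrt_mul (sq_nonneg _), Real.sqrt_sq hσt]
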